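/- Suppose in addition that C contains an essential closed two-sided ideal that is separable as a topological space, or an essential closed two-sided ideal that is simple (its only closed two-sided ideals are {0} and itself). Then the inclusion C ⊆ A is aperiodic. -/

import Mathlib

open scoped ContinuousMapZero


variable {A : Type*} [NonUnitalCStarAlgebra A] [PartialOrder A] [StarOrderedRing A]

/-- The set of normalisers of `D` inside the subset `B` of `A`:
`N_B(D) = {m ∈ B : m* D m ⊆ D and m D m* ⊆ D}`. -/
def relNormalizers (B D : Set A) : Set A :=
  {m | m ∈ B ∧ (∀ c ∈ D, star m * c * m ∈ D) ∧ (∀ c ∈ D, m * c * star m ∈ D)}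

/-- The inclusion `D ⊆ B` is regular: the smallest closed *-subalgebra of `B`
containing `N_B(D)` is `B` itself. -/
def IsRegularIncl (B D : Set A) : Prop :=
  closure ((NonUnitalStarAlgebra.adjoin ℂ (relNormalizers B D) :
    NonUnitalStarSubalgebra ℂ A) : Set A) = B

/-- `X · Y`: the closed linear span of the set of products `x * y`, `x ∈ X`, `y ∈ Y`. -/
def cspanMul (X Y : Set A) : Set A :=
  closure ((Submodule.span ℂ {z : A | ∃ x ∈ X, ∃ y ∈ Y, z = x * y} : Submodule ℂ A) : Set A)

/-- `Q` is a conditional expectation from `B` onto `D`: a contractive linear map on `B`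
with range in `D`, restricting to the identity on `D`, positive, and `D`-bimodular. -/
def IsCondExpOn (B D : Set A) (Q : A → A) : Prop :=
  (∀ a ∈ B, ‖Q a‖ ≤ ‖a‖) ∧ (∀ a ∈ B, ∀ b ∈ B, Q (a + b) = Q a + Q b) ∧
    (∀ (z : ℂ), ∀ a ∈ B, Q (z • a) = z • Q a) ∧ (∀ a ∈ B, Q a ∈ D) ∧
    (∀ d ∈ D, Q d = d) ∧ (∀ a ∈ B, 0 ≤ a → 0 ≤ Q a) ∧
    (∀ d₁ ∈ D, ∀ d₂ ∈ D, ∀ a ∈ B, Q (d₁ * a * d₂) = d₁ * Q a * d₂)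

/-- `D` contains an approximate unit for `B`. -/
def HasApproxUnitIn (D B : Set A) : Prop :=
  ∀ b ∈ B, ∀ ε > (0 : ℝ), ∃ d ∈ D, 0 ≤ d ∧ ‖d‖ ≤ 1 ∧ ‖b - d * b‖ < ε ∧ ‖b - b * d‖ < ε

/-- Every virtual commutant of `D` in `B` is trivial: every continuous linear
`D`-bimodule map `φ : J → B` on a closed two-sided ideal `J` of `D` has range in `D`. -/
def VirtualCommutantsTrivial (B D : Set A) : Prop :=
  ∀ (J : Set A), J ⊆ D → IsClosed J → (0 : A) ∈ J →
    (∀ x ∈ J, ∀ y ∈ J, x + y ∈ J) → (∀ (z : ℂ), ∀ x ∈ J, z • x ∈ J) →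
    (∀ d ∈ D, ∀ j ∈ J, d * j ∈ J) → (∀ d ∈ D, ∀ j ∈ J, j * d ∈ J) →
    ∀ (φ : A → A),
      (∀ j ∈ J, φ j ∈ B) →
      (∀ x ∈ J, ∀ y ∈ J, φ (x + y) = φ x + φ y) →
      (∀ (z : ℂ), ∀ x ∈ J, φ (z • x) = z • φ x) →
      (∃ K : ℝ, ∀ j ∈ J, ‖φ j‖ ≤ K * ‖j‖) →
      (∀ d ∈ D, ∀ j ∈ J, φ (d * j) = d * φ j) →
      (∀ d ∈ D, ∀ j ∈ J, φ (j * d) = φ j * d) →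
      ∀ j ∈ J, φ j ∈ D

/-- The inclusion `D ⊆ B` is aperiodic. -/
def IsAperiodicIncl (B D : Set A) : Prop :=
  ∀ b ∈ B, ∀ ε > (0 : ℝ), ∀ c ∈ D, 0 ≤ c → c ≠ 0 →
    ∃ d ∈ closure {x : A | ∃ y ∈ D, x = c * y * c},
      0 ≤ d ∧ ‖d‖ = 1 ∧ ∃ z ∈ D, ‖d * b * d - z‖ < ε

/-- `J` is a closed two-sided ideal of `D`. -/
def IsClosedIdealOf (J D : Set A) : Prop :=
  J ⊆ D ∧ IsClosed J ∧ (0 : A) ∈ J ∧ (∀ x ∈ J, ∀ y ∈ J, x + y ∈ J) ∧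
    (∀ (z : ℂ), ∀ x ∈ J, z • x ∈ J) ∧ (∀ d ∈ D, ∀ j ∈ J, d * j ∈ J ∧ j * d ∈ J)


private lemma chain_subset' {S : ℕ → Set A} (h : ∀ n, S n ⊆ S (n + 1)) {m n : ℕ}
    (hmn : m ≤ n) : S m ⊆ S n := by
  induction n, hmn using Nat.le_induction with
  | base => exact subset_rfl
  | succ n hmn ih => exact ih.trans (h n)

private lemma cfcn_mem' {S : NonUnitalStarSubalgebra ℂ A} (hS : IsClosed (S : Set A))
    {a : A} (haS : a ∈ S) (f : ℝ → ℝ) : cfcₙ f a ∈ S := by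
  by_cases hsa : IsSelfAdjoint a
  swap
  · rw [cfcₙ_apply_of_not_predicate a hsa]; exact zero_mem S
  by_cases hf : ContinuousOn f (quasispectrum ℝ a)
  swap
  · rw [cfcₙ_apply_of_not_continuousOn a hf]; exact zero_mem S
  by_cases hf0 : f 0 = 0
  swap
  · rw [cfcₙ_apply_of_not_map_zero a hf0]; exact zero_mem S
  rw [cfcₙ_apply f a hf hf0 hsa]
  have hmem : ∀ p ∈ (NonUnitalStarAlgebra.adjoin ℝ
      {(ContinuousMapZero.id (quasispectrum ℝ a) : C(quasispectrum ℝ a, ℝ)₀)}),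
      cfcₙHom (R := ℝ) hsa p ∈ S := by
    intro p hp
    induction hp using NonUnitalStarAlgebra.adjoin_induction with
    | mem x hx =>
        simp only [Set.mem_singleton_iff] at hx
        subst hx
        have : cfcₙHom (R := ℝ) hsa (ContinuousMapZero.id (quasispectrum ℝ a)) = a := cfcₙHom_id hsa
        rw [this]; exact haS
    | add x y hx hy ihx ihy => rw [map_add]; exact add_mem ihx ihy
    | zero => rw [map_zero]; exact zero_mem S
    | mul x y hx hy ihx ihy => rw [map_mul]; exact mul_mem ihx ihy
    | smul r x hx ihx =>
        rw [map_smul, ← algebraMap_smul ℂ r (cfcₙHom (R := ℝ) hsa x)]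
        exact SMulMemClass.smul_mem _ ihx
    | star x hx ihx => rw [map_star]; exact star_mem ihx
  have hcl : closure ((NonUnitalStarAlgebra.adjoin ℝ
      {(ContinuousMapZero.id (quasispectrum ℝ a) : C(quasispectrum ℝ a, ℝ)₀)}) : Set _) ⊆
      (cfcₙHom (R := ℝ) hsa) ⁻¹' (S : Set A) :=
    closure_minimal hmem (hS.preimage (cfcₙHom_continuous hsa))
  exact hcl <| by
    rw [(ContinuousMapZero.adjoin_id_dense (quasispectrum ℝ a)).closure_eq]
    trivial

private noncomputable def sqrtA (u : A) : A := cfcₙ (fun t : ℝ => Real.sqrt (max t 0)) u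

private lemma sqrtA_nonneg (u : A) : 0 ≤ sqrtA (A := A) u := by
  by_cases hsa : IsSelfAdjoint u
  · exact cfcₙ_nonneg fun t _ => Real.sqrt_nonneg _
  · rw [sqrtA, cfcₙ_apply_of_not_predicate u hsa]

private lemma sqrtA_sa (u : A) : star (sqrtA u) = sqrtA u :=
  (IsSelfAdjoint.of_nonneg (sqrtA_nonneg u)).star_eq

private lemma sqrtA_mul_self {u : A} (hu : 0 ≤ u) : sqrtA u * sqrtA u = u := by
  have hsa : IsSelfAdjoint u := .of_nonneg hu
  rw [sqrtA, ← cfcₙ_mul _ _ u]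
  calc cfcₙ (fun t : ℝ => Real.sqrt (max t 0) * Real.sqrt (max t 0)) u
      = cfcₙ (id : ℝ → ℝ) u := by
        apply cfcₙ_congr
        intro t ht
        have ht0 : 0 ≤ t := quasispectrum_nonneg_of_nonneg u hu t ht
        simp [max_eq_left ht0, Real.mul_self_sqrt ht0]
    _ = u := cfcₙ_id ℝ u

private lemma smul_nn {r : ℝ} (hr : 0 ≤ r) {w : A} (hw : 0 ≤ w) : 0 ≤ r • w := by
  have h1 : r • w = star (Real.sqrt r • sqrtA w) * (Real.sqrt r • sqrtA w) := by
    rw [star_smul, star_trivial, sqrtA_sa, smul_mul_smul_comm, Real.mul_self_sqrt hr,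
      sqrtA_mul_self hw]
  rw [h1]; exact star_mul_self_nonneg _

/-- the union of an increasing chain of non-unital star subalgebras. -/
private def unionAlg (C_ : ℕ → NonUnitalStarSubalgebra ℂ A)
    (hmono : ∀ n, (C_ n : Set A) ⊆ (C_ (n + 1) : Set A)) : NonUnitalStarSubalgebra ℂ A where
  carrier := ⋃ n, (C_ n : Set A)
  add_mem' := by
    rintro x y hx hy
    obtain ⟨i, hi⟩ := Set.mem_iUnion.mp hx
    obtain ⟨j, hj⟩ := Set.mem_iUnion.mp hy
    exact Set.mem_iUnion.mpr ⟨max i j,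
      add_mem (chain_subset' hmono (le_max_left i j) hi)
        (chain_subset' hmono (le_max_right i j) hj)⟩
  zero_mem' := Set.mem_iUnion.mpr ⟨0, zero_mem (C_ 0)⟩
  mul_mem' := by
    rintro x y hx hy
    obtain ⟨i, hi⟩ := Set.mem_iUnion.mp hx
    obtain ⟨j, hj⟩ := Set.mem_iUnion.mp hy
    exact Set.mem_iUnion.mpr ⟨max i j,
      mul_mem (chain_subset' hmono (le_max_left i j) hi)
        (chain_subset' hmono (le_max_right i j) hj)⟩
  smul_mem' := by
    rintro z x hx
    obtain ⟨i, hi⟩ := Set.mem_iUnion.mp hx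
    exact Set.mem_iUnion.mpr ⟨i, SMulMemClass.smul_mem z hi⟩
  star_mem' := by
    rintro x hx
    obtain ⟨i, hi⟩ := Set.mem_iUnion.mp hx
    exact Set.mem_iUnion.mpr ⟨i, star_mem hi⟩

/-- the `c₁`-sandwich subalgebra `{c₁ y c₁ : y ∈ S}`. -/
private def sandAlg (S : NonUnitalStarSubalgebra ℂ A) {c₁ : A} (hc₁ : c₁ ∈ S)
    (hsa : star c₁ = c₁) : NonUnitalStarSubalgebra ℂ A where
  carrier := {x | ∃ y ∈ (S : Set A), x = c₁ * y * c₁}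
  add_mem' := by
    rintro x y ⟨u, hu, rfl⟩ ⟨v, hv, rfl⟩
    exact ⟨u + v, add_mem hu hv, by noncomm_ring⟩
  zero_mem' := ⟨0, zero_mem S, by simp⟩
  mul_mem' := by
    rintro x y ⟨u, hu, rfl⟩ ⟨v, hv, rfl⟩
    exact ⟨u * c₁ * c₁ * v, mul_mem (mul_mem (mul_mem hu hc₁) hc₁) hv, by noncomm_ring⟩
  smul_mem' := by
    rintro z x ⟨u, hu, rfl⟩
    exact ⟨z • u, SMulMemClass.smul_mem z hu, by
      simp [mul_smul_comm, smul_mul_assoc]⟩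
  star_mem' := by
    rintro x ⟨u, hu, rfl⟩
    exact ⟨star u, star_mem hu, by simp [star_mul, hsa, mul_assoc]⟩

set_option maxHeartbeats 1000000 in
theorem stmt13
    (A_ C_ : ℕ → NonUnitalStarSubalgebra ℂ A)
    (hAclosed : ∀ n, IsClosed (A_ n : Set A))
    (hCclosed : ∀ n, IsClosed (C_ n : Set A))
    (hAmono : ∀ n, (A_ n : Set A) ⊆ (A_ (n + 1) : Set A))
    (hCmono : ∀ n, (C_ n : Set A) ⊆ (C_ (n + 1) : Set A))
    (hCA : ∀ n, (C_ n : Set A) ⊆ (A_ n : Set A))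
    (hAdense : Dense (⋃ n, (A_ n : Set A)))
    (Pn : ℕ → A → A)
    (hReg : ∀ n, IsRegularIncl (A_ n : Set A) (C_ n : Set A))
    (hPn : ∀ n, IsCondExpOn (A_ n : Set A) (C_ n : Set A) (Pn n))
    (hPnFaithful : ∀ n, ∀ a ∈ (A_ n : Set A), Pn n (star a * a) = 0 → a = 0)
    (hApprox : ∀ n, HasApproxUnitIn (C_ n : Set A) (A_ n : Set A))
    (hVC : ∀ n, VirtualCommutantsTrivial (A_ n : Set A) (C_ n : Set A))
    (hAper : ∀ n, IsAperiodicIncl (A_ n : Set A) (C_ n : Set A))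
    (hAnondeg : ∀ n, cspanMul (A_ n : Set A) (A_ (n + 1) : Set A) = (A_ (n + 1) : Set A))
    (hCnondeg : ∀ n, cspanMul (C_ n : Set A) (C_ (n + 1) : Set A) = (C_ (n + 1) : Set A))
    (hNormIncl : ∀ n, relNormalizers (A_ n : Set A) (C_ n : Set A) ⊆
      relNormalizers (A_ (n + 1) : Set A) (C_ (n + 1) : Set A))
    (hPnCompat : ∀ n, ∀ a ∈ (A_ n : Set A), Pn (n + 1) a = Pn n a)
    (P : A →L[ℂ] A)
    (hP : ∀ n, ∀ a ∈ (A_ n : Set A), P a = Pn n a)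
    (hEss : ∃ I : Set A, IsClosedIdealOf I (closure (⋃ k, (C_ k : Set A))) ∧
      (∀ J : Set A, IsClosedIdealOf J (closure (⋃ k, (C_ k : Set A))) → J ≠ {0} →
        I ∩ J ≠ {0}) ∧
      (TopologicalSpace.IsSeparable I ∨
        (∀ J : Set A, IsClosedIdealOf J I → J = {0} ∨ J = I))) :
    IsAperiodicIncl (Set.univ : Set A) (closure (⋃ k, (C_ k : Set A))) := by
  classical
  intro b _hb ε hε c hcC hc0 hcne
  -- package `C = closure (⋃ k, C_ k)` as a closed star subalgebra
  set Dalg : NonUnitalStarSubalgebra ℂ A := unionAlg C_ hCmono with hDalg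
  set Cbalg : NonUnitalStarSubalgebra ℂ A := Dalg.topologicalClosure with hCbalg
  have hCbcar : (Cbalg : Set A) = closure (⋃ k, (C_ k : Set A)) := rfl
  have hCsub : ∀ k, (C_ k : Set A) ⊆ (Cbalg : Set A) := by
    intro k
    refine (Set.subset_iUnion (fun k => (C_ k : Set A)) k).trans ?_
    rw [hCbcar]; exact subset_closure
  have hcCb : c ∈ Cbalg := hcC
  -- basic facts about `c`
  have hcsa : star c = c := (IsSelfAdjoint.of_nonneg hc0).star_eq
  have hcpos : (0 : ℝ) < ‖c‖ := norm_pos_iff.mpr hcne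
  set ct : A := c * c with hct
  have hctCb : ct ∈ Cbalg := mul_mem hcCb hcCb
  have hct0 : 0 ≤ ct := by
    have := star_mul_self_nonneg c; rwa [hcsa] at this
  have hctsa : IsSelfAdjoint ct := .of_nonneg hct0
  have hctnorm : ‖ct‖ = ‖c‖ * ‖c‖ := by
    calc ‖ct‖ = ‖star c * c‖ := by rw [hct, hcsa]
      _ = ‖c‖ * ‖c‖ := CStarRing.norm_star_mul_self
  have hctpos : (0 : ℝ) < ‖ct‖ := by rw [hctnorm]; positivity
  set δ : ℝ := ‖ct‖ / 2 with hδ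
  have hδpos : 0 < δ := by positivity
  -- approximate `c` by a self-adjoint element `s` of the union, and `ct` by `c₀ = s * s`
  set ρ : ℝ := min 1 (‖ct‖ / (8 * (2 * ‖c‖ + 1))) with hρ
  have hρpos : 0 < ρ := by
    apply lt_min one_pos; positivity
  obtain ⟨x, hxU, hxc⟩ : ∃ x ∈ ⋃ k, (C_ k : Set A), ‖c - x‖ < ρ := by
    obtain ⟨x, hx, hd⟩ := Metric.mem_closure_iff.mp hcC ρ hρpos
    exact ⟨x, hx, by rwa [dist_eq_norm] at hd⟩
  obtain ⟨m, hxm⟩ : ∃ m, x ∈ (C_ m : Set A) := Set.mem_iUnion.mp hxU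
  set s : A := (1 / 2 : ℂ) • (x + star x) with hs
  have hsm : s ∈ C_ m := SMulMemClass.smul_mem _ (add_mem hxm (star_mem hxm))
  have hhalf : star (1 / 2 : ℂ) = (1 / 2 : ℂ) := by simp
  have hssa : star s = s := by
    rw [hs, star_smul, hhalf, star_add, star_star, add_comm]
  have hcs : ‖c - s‖ ≤ ‖c - x‖ := by
    have hid : c - s = (1 / 2 : ℂ) • ((c - x) + star (c - x)) := by
      rw [star_sub, hcsa, hs]
      module
    calc ‖c - s‖ = ‖(1 / 2 : ℂ)‖ * ‖(c - x) + star (c - x)‖ := by rw [hid, norm_smul]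
      _ ≤ ‖(1 / 2 : ℂ)‖ * (‖c - x‖ + ‖star (c - x)‖) := by
          gcongr; exact norm_add_le _ _
      _ = ‖c - x‖ := by rw [norm_star]; simp; ring
  have hcsρ : ‖c - s‖ < ρ := lt_of_le_of_lt hcs hxc
  set c₀ : A := s * s with hc₀
  have hc₀m : c₀ ∈ C_ m := mul_mem hsm hsm
  have hc₀0 : 0 ≤ c₀ := by
    have := star_mul_self_nonneg s; rwa [hssa] at this
  have hc₀sa : IsSelfAdjoint c₀ := .of_nonneg hc₀0
  have hsnorm : ‖s‖ ≤ ‖c‖ + 1 := by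
    have h1 : ‖s‖ ≤ ‖c‖ + ‖c - s‖ := by
      calc ‖s‖ = ‖c - (c - s)‖ := by congr 1; abel
        _ ≤ ‖c‖ + ‖c - s‖ := norm_sub_le _ _
    have h2 : ρ ≤ 1 := min_le_left _ _
    linarith
  have hδ'' : ‖ct - c₀‖ ≤ ‖ct‖ / 8 := by
    have hid : ct - c₀ = c * (c - s) + (c - s) * s := by rw [hct, hc₀]; noncomm_ring
    have h1 : ‖ct - c₀‖ ≤ ‖c‖ * ‖c - s‖ + ‖c - s‖ * ‖s‖ := by
      rw [hid]
      exact (norm_add_le _ _).trans (add_le_add (norm_mul_le _ _) (norm_mul_le _ _))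
    have h2 : ‖c‖ * ‖c - s‖ + ‖c - s‖ * ‖s‖ ≤ (2 * ‖c‖ + 1) * ρ := by
      have := hcsρ.le
      nlinarith [norm_nonneg (c - s), norm_nonneg s, norm_nonneg c]
    have h3 : (2 * ‖c‖ + 1) * ρ ≤ ‖ct‖ / 8 := by
      have h4 : ρ ≤ ‖ct‖ / (8 * (2 * ‖c‖ + 1)) := min_le_right _ _
      have h5 : (0 : ℝ) < 2 * ‖c‖ + 1 := by positivity
      calc (2 * ‖c‖ + 1) * ρ ≤ (2 * ‖c‖ + 1) * (‖ct‖ / (8 * (2 * ‖c‖ + 1))) := by gcongr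
        _ = ‖ct‖ / 8 := by field_simp
    linarith
  set η : ℝ := δ - ‖ct - c₀‖ with hη
  have hηge : ‖ct‖ * (3 / 8) ≤ η := by rw [hη, hδ]; linarith
  have hηpos : 0 < η := lt_of_lt_of_le (by positivity) hηge
  set ε₁ : ℝ := ε * η ^ 2 / (4 * (‖c‖ ^ 2 + 1)) with hε₁
  have hε₁pos : 0 < ε₁ := by positivity
  -- approximate `c * b * c` by an element `a''` of the union of the `A_ n`
  obtain ⟨a'', ha''U, ha''⟩ : ∃ a'' ∈ ⋃ k, (A_ k : Set A), ‖c * b * c - a''‖ < ε₁ := by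
    have h1 : c * b * c ∈ closure (⋃ n, (A_ n : Set A)) := by
      rw [hAdense.closure_eq]; trivial
    obtain ⟨y, hy, hd⟩ := Metric.mem_closure_iff.mp h1 ε₁ hε₁pos
    exact ⟨y, hy, by rwa [dist_eq_norm] at hd⟩
  obtain ⟨n₀, ha''n⟩ : ∃ n₀, a'' ∈ (A_ n₀ : Set A) := Set.mem_iUnion.mp ha''U
  set n : ℕ := max m n₀ with hn
  have hc₀n : c₀ ∈ C_ n := chain_subset' hCmono (le_max_left m n₀) hc₀m
  have ha''An : a'' ∈ (A_ n : Set A) := chain_subset' hAmono (le_max_right m n₀) ha''n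
  -- the spectral cut-down `c₁ = (c₀ - δ)₊ ∈ C_ n`
  set f : ℝ → ℝ := fun t => max (t - δ) 0 with hf
  have hfc : Continuous f := by rw [hf]; fun_prop
  have hf0 : f 0 = 0 := by
    rw [hf]; simp only [zero_sub, max_eq_right_iff, Left.neg_nonpos_iff]; exact hδpos.le
  set c₁ : A := cfcₙ f c₀ with hc₁
  have hc₁n : c₁ ∈ C_ n := cfcn_mem' (hCclosed n) hc₀n f
  have hc₁0 : 0 ≤ c₁ := cfcₙ_nonneg fun t _ => le_max_right _ _
  have hc₁sa : star c₁ = c₁ := (IsSelfAdjoint.of_nonneg hc₁0).star_eq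
  have hc₁c₀ : ‖c₁ - c₀‖ ≤ δ := by
    have hid : c₁ - c₀ = cfcₙ (fun t : ℝ => f t - t) c₀ := by
      rw [hc₁, cfcₙ_sub f (fun t : ℝ => t) c₀ hfc.continuousOn hf0 continuous_id.continuousOn rfl,
        cfcₙ_id' ℝ c₀]
    rw [hid]
    apply norm_cfcₙ_le
    intro t ht
    have ht0 : 0 ≤ t := quasispectrum_nonneg_of_nonneg c₀ hc₀0 t ht
    rw [Real.norm_eq_abs, abs_le]
    simp only [hf]
    rcases le_or_gt t δ with h | h
    · rw [max_eq_right (by linarith : t - δ ≤ 0)]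
      constructor <;> linarith
    · rw [max_eq_left (by linarith : (0 : ℝ) ≤ t - δ)]
      constructor <;> linarith
  have hc₁ne : c₁ ≠ 0 := by
    intro h0
    have h1 : ‖ct‖ ≤ ‖ct - c₀‖ + ‖c₀ - c₁‖ + ‖c₁‖ := by
      calc ‖ct‖ = ‖(ct - c₀) + (c₀ - c₁) + c₁‖ := by congr 1; abel
        _ ≤ ‖(ct - c₀) + (c₀ - c₁)‖ + ‖c₁‖ := norm_add_le _ _
        _ ≤ ‖ct - c₀‖ + ‖c₀ - c₁‖ + ‖c₁‖ := by gcongr; exact norm_add_le _ _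
    have h2 : ‖c₀ - c₁‖ ≤ δ := by rw [norm_sub_rev]; exact hc₁c₀
    have h3 : ‖c₁‖ = 0 := by rw [h0, norm_zero]
    rw [hδ] at h2
    linarith
  -- apply aperiodicity at level n
  obtain ⟨d', hd'mem, hd'0, hd'norm, z'', hz''n, hz''⟩ :=
    hAper n a'' ha''An ε₁ hε₁pos c₁ hc₁n hc₁0 hc₁ne
  -- the sandwich algebra
  set Talg : NonUnitalStarSubalgebra ℂ A := sandAlg (C_ n) hc₁n hc₁sa with hTalg
  have hTalgcar : (Talg : Set A) = {x | ∃ y ∈ (C_ n : Set A), x = c₁ * y * c₁} := rfl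
  have hd'T : d' ∈ closure (Talg : Set A) := hd'mem
  have hTn : (Talg : Set A) ⊆ (C_ n : Set A) := by
    rintro _ ⟨y, hy, rfl⟩
    exact mul_mem (mul_mem hc₁n hy) hc₁n
  have hd'n : d' ∈ (C_ n : Set A) := closure_minimal hTn (hCclosed n) hd'T
  have hd'Cb : d' ∈ Cbalg := hCsub n hd'n
  have hd'sa : star d' = d' := (IsSelfAdjoint.of_nonneg hd'0).star_eq
  -- the square root of d'
  set X : A := sqrtA d' with hX
  have hXX : X * X = d' := sqrtA_mul_self hd'0
  have hX0 : 0 ≤ X := sqrtA_nonneg d'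
  have hXsa : star X = X := sqrtA_sa d'
  have hXT : X ∈ closure (Talg : Set A) := by
    have h1 : d' ∈ Talg.topologicalClosure := hd'T
    have h2 := cfcn_mem' (S := Talg.topologicalClosure)
      (Talg.isClosed_topologicalClosure) h1 (fun t : ℝ => Real.sqrt (max t 0))
    exact h2
  -- key inequality: δ • (star t * t) ≤ star t * c₀ * t on the closure of Talg
  have hGkey : ∀ t ∈ closure (Talg : Set A), δ • (star t * t) ≤ star t * c₀ * t := by
    set G : A := c₁ * c₀ * c₁ - δ • (c₁ * c₁) with hG
    have hG0 : 0 ≤ G := by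
      have h1 : cfcₙ (fun t : ℝ => f t * t) c₀ = c₁ * c₀ := by
        rw [cfcₙ_mul f (fun t : ℝ => t) c₀ hfc.continuousOn hf0 continuous_id.continuousOn rfl,
          cfcₙ_id' ℝ c₀, hc₁]
      have h2 : cfcₙ (fun t : ℝ => f t * t * f t) c₀ = c₁ * c₀ * c₁ := by
        rw [cfcₙ_mul (fun t : ℝ => f t * t) f c₀ ((hfc.mul continuous_id).continuousOn)
          (by simp [hf0]) hfc.continuousOn hf0, h1, hc₁]
      have h3 : cfcₙ (fun t : ℝ => f t * f t) c₀ = c₁ * c₁ := by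
        rw [cfcₙ_mul f f c₀ hfc.continuousOn hf0 hfc.continuousOn hf0, hc₁]
      have h4 : cfcₙ (fun t : ℝ => δ • (f t * f t)) c₀ = δ • (c₁ * c₁) := by
        rw [cfcₙ_smul δ (fun t : ℝ => f t * f t) c₀ ((hfc.mul hfc).continuousOn) (by simp [hf0]), h3]
      have h5 : G = cfcₙ (fun t : ℝ => f t * t * f t - δ • (f t * f t)) c₀ := by
        rw [hG, ← h2, ← h4,
          cfcₙ_sub (fun t : ℝ => f t * t * f t) (fun t : ℝ => δ • (f t * f t)) c₀
            (((hfc.mul continuous_id).mul hfc).continuousOn) (by simp [hf0])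
            ((show Continuous fun t : ℝ => δ • (f t * f t) by fun_prop).continuousOn) (by simp [hf0])]
      rw [h5]
      apply cfcₙ_nonneg
      intro t _
      simp only [hf, smul_eq_mul]
      rcases le_or_gt t δ with h | h
      · rw [max_eq_right (by linarith : t - δ ≤ 0)]; simp
      · rw [max_eq_left (by linarith : (0 : ℝ) ≤ t - δ)]; nlinarith
    set r : A := sqrtA G with hr
    have hrr : r * r = G := sqrtA_mul_self hG0
    have hrsa : star r = r := sqrtA_sa G
    have hkeyT : (Talg : Set A) ⊆ {t : A | 0 ≤ star t * c₀ * t - δ • (star t * t)} := by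
      rintro _ ⟨y, hy, rfl⟩
      have hstar : star (c₁ * y * c₁) = c₁ * star y * c₁ := by
        simp [star_mul, hc₁sa, mul_assoc]
      have e1 : star (c₁ * y * c₁) * c₀ * (c₁ * y * c₁)
          = (c₁ * star y) * (c₁ * c₀ * c₁) * (y * c₁) := by
        rw [hstar]; noncomm_ring
      have e2 : star (c₁ * y * c₁) * (c₁ * y * c₁)
          = (c₁ * star y) * (c₁ * c₁) * (y * c₁) := by
        rw [hstar]; noncomm_ring
      have e3 : star (r * (y * c₁)) * (r * (y * c₁))
          = (c₁ * star y) * (r * r) * (y * c₁) := by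
        rw [star_mul, star_mul, hrsa, hc₁sa]; noncomm_ring
      have hid : star (c₁ * y * c₁) * c₀ * (c₁ * y * c₁)
          - δ • (star (c₁ * y * c₁) * (c₁ * y * c₁))
          = star (r * (y * c₁)) * (r * (y * c₁)) := by
        rw [e1, e2, e3, hrr, hG]
        simp only [mul_sub, sub_mul, mul_smul_comm, smul_mul_assoc, mul_assoc]
      show 0 ≤ _
      rw [sub_nonneg] at *
      rw [← sub_nonneg, hid]
      exact star_mul_self_nonneg _
    have hclosed : IsClosed {t : A | 0 ≤ star t * c₀ * t - δ • (star t * t)} := by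
      have hcont : Continuous fun t : A => star t * c₀ * t - δ • (star t * t) := by
        fun_prop
      exact CStarAlgebra.isClosed_nonneg.preimage hcont
    intro t ht
    have h6 := closure_minimal hkeyT hclosed ht
    rw [Set.mem_setOf_eq, sub_nonneg] at h6
    exact h6
  -- lower bound for M = ‖c * d' * c‖
  have hXc₀ : δ • d' ≤ X * c₀ * X := by
    have := hGkey X hXT
    rwa [hXsa, hXX] at this
  have hconj : X * (c₀ - ct) * X ≤ ‖c₀ - ct‖ • d' := by
    have h1 := CStarAlgebra.star_left_conjugate_le_norm_smul (a := X) (b := c₀ - ct)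
      (hc₀sa.sub hctsa)
    rwa [hXsa, hXX] at h1
  have hXctX : η • d' ≤ X * ct * X := by
    have h1 : X * ct * X = X * c₀ * X - X * (c₀ - ct) * X := by noncomm_ring
    have h2 : ‖c₀ - ct‖ = ‖ct - c₀‖ := norm_sub_rev _ _
    calc η • d' = δ • d' - ‖ct - c₀‖ • d' := by rw [hη, sub_smul]
      _ ≤ X * c₀ * X - X * (c₀ - ct) * X := by
          apply sub_le_sub hXc₀
          rw [← h2]; exact hconj
      _ = X * ct * X := h1.symm
  have hηd'0 : 0 ≤ η • d' := smul_nn hηpos.le hd'0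
  set M : ℝ := ‖c * d' * c‖ with hM
  have hMM : M = ‖X * ct * X‖ := by
    have h1 : c * d' * c = (c * X) * star (c * X) := by
      rw [star_mul, hXsa, hcsa, ← hXX]; noncomm_ring
    have h2 : X * ct * X = star (c * X) * (c * X) := by
      rw [star_mul, hXsa, hcsa, hct]; noncomm_ring
    rw [hM, h1, h2, CStarRing.norm_self_mul_star, CStarRing.norm_star_mul_self]
  have hMge : η ≤ M := by
    rw [hMM]
    calc η = ‖η • d'‖ := by
          rw [norm_smul, Real.norm_eq_abs, abs_of_pos hηpos, hd'norm, mul_one]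
      _ ≤ ‖X * ct * X‖ := CStarAlgebra.norm_le_norm_of_nonneg_of_le hηd'0 hXctX
  have hMpos : 0 < M := lt_of_lt_of_le hηpos hMge
  -- the desired element d and the approximating element z
  refine ⟨M⁻¹ • (c * d' * c), ?_, ?_, ?_, (M⁻¹ * M⁻¹) • (c * z'' * c), ?_, ?_⟩
  · -- membership in the closure of {c y c : y ∈ C}
    apply subset_closure
    refine ⟨M⁻¹ • d', ?_, ?_⟩
    · show M⁻¹ • d' ∈ (Cbalg : Set A)
      rw [← algebraMap_smul ℂ M⁻¹ d']
      exact SMulMemClass.smul_mem _ hd'Cb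
    · rw [mul_smul_comm, smul_mul_assoc]
  · -- nonneg
    apply smul_nn (inv_nonneg.mpr hMpos.le)
    have h1 : c * d' * c = star (X * c) * (X * c) := by
      rw [star_mul, hXsa, hcsa, ← hXX]; noncomm_ring
    rw [h1]; exact star_mul_self_nonneg _
  · -- norm one
    rw [norm_smul, Real.norm_eq_abs, abs_of_pos (inv_pos.mpr hMpos), ← hM,
      inv_mul_cancel₀ hMpos.ne']
  · -- z ∈ C
    show (M⁻¹ * M⁻¹) • (c * z'' * c) ∈ (Cbalg : Set A)
    rw [← algebraMap_smul ℂ (M⁻¹ * M⁻¹) (c * z'' * c)]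
    exact SMulMemClass.smul_mem _ (mul_mem (mul_mem hcCb (hCsub n hz''n)) hcCb)
  · -- the estimate
    set w : A := d' * (c * b * c) * d' - z'' with hw
    have hdbd : (M⁻¹ • (c * d' * c)) * b * (M⁻¹ • (c * d' * c))
        = (M⁻¹ * M⁻¹) • (c * (d' * (c * b * c) * d') * c) := by
      simp only [smul_mul_assoc, mul_smul_comm, smul_smul]
      congr 1
      noncomm_ring
    have hdiff : (M⁻¹ • (c * d' * c)) * b * (M⁻¹ • (c * d' * c))
        - (M⁻¹ * M⁻¹) • (c * z'' * c) = (M⁻¹ * M⁻¹) • (c * w * c) := by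
      rw [hdbd, ← smul_sub, hw]
      congr 1
      rw [mul_sub, sub_mul]
    have hwbound : ‖w‖ < ε₁ + ε₁ := by
      have h1 : w = d' * ((c * b * c) - a'') * d' + (d' * a'' * d' - z'') := by
        rw [hw]; noncomm_ring
      have h2 : ‖d' * ((c * b * c) - a'') * d'‖ ≤ ‖c * b * c - a''‖ := by
        calc ‖d' * ((c * b * c) - a'') * d'‖ ≤ ‖d' * ((c * b * c) - a'')‖ * ‖d'‖ :=
              norm_mul_le _ _
          _ ≤ ‖d'‖ * ‖c * b * c - a''‖ * ‖d'‖ := by gcongr; exact norm_mul_le _ _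
          _ = ‖c * b * c - a''‖ := by rw [hd'norm]; ring
      calc ‖w‖ ≤ ‖d' * ((c * b * c) - a'') * d'‖ + ‖d' * a'' * d' - z''‖ := by
            rw [h1]; exact norm_add_le _ _
        _ < ε₁ + ε₁ := by
            apply add_lt_add_of_le_of_lt _ hz''
            exact h2.trans ha''.le
    have hcwc : ‖c * w * c‖ ≤ ‖c‖ * ‖w‖ * ‖c‖ := by
      calc ‖c * w * c‖ ≤ ‖c * w‖ * ‖c‖ := norm_mul_le _ _
        _ ≤ ‖c‖ * ‖w‖ * ‖c‖ := by gcongr; exact norm_mul_le _ _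
    have hMinv : M⁻¹ ≤ η⁻¹ := by
      apply inv_anti₀ hηpos hMge
    calc ‖(M⁻¹ • (c * d' * c)) * b * (M⁻¹ • (c * d' * c)) - (M⁻¹ * M⁻¹) • (c * z'' * c)‖
        = (M⁻¹ * M⁻¹) * ‖c * w * c‖ := by
          rw [hdiff, norm_smul, Real.norm_eq_abs, abs_of_pos (by positivity)]
      _ ≤ (M⁻¹ * M⁻¹) * (‖c‖ * ‖w‖ * ‖c‖) := by gcongr
      _ < (M⁻¹ * M⁻¹) * (‖c‖ * (ε₁ + ε₁) * ‖c‖) := by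
          have : (0 : ℝ) < M⁻¹ * M⁻¹ := by positivity
          apply mul_lt_mul_of_pos_left _ this
          apply mul_lt_mul_of_pos_right _ hcpos
          exact mul_lt_mul_of_pos_left hwbound hcpos
      _ ≤ (η⁻¹ * η⁻¹) * (‖c‖ * (ε₁ + ε₁) * ‖c‖) := by
          have h7 : (0 : ℝ) ≤ ‖c‖ * (ε₁ + ε₁) * ‖c‖ := by positivity
          apply mul_le_mul_of_nonneg_right _ h7
          have h8 : (0 : ℝ) < M⁻¹ := by positivity
          exact mul_le_mul hMinv hMinv h8.le (by positivity)
      _ = ε * (‖c‖ ^ 2 / (‖c‖ ^ 2 + 1)) / 2 := by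
          rw [hε₁]
          field_simp
          ring
      _ < ε := by
          have h9 : ‖c‖ ^ 2 / (‖c‖ ^ 2 + 1) < 1 := by
            rw [div_lt_one (by positivity)]; linarith
          nlinarith
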